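/- Let 0 < λ ≤ Λ and let z : [0, ∞) → ℝ be a C² function with z(0) = 0, z ≤ 0, z' ≤ 0, satisfying -Λ z''(r) - λ z'(r)/r = e^{z(r)} for r ∈ (0, ∞). Then for all r > 0, 0 ≥ z'(r) ≥ -r/(λ + Λ), and consequently z'(r) → 0 as r → 0⁺. -/

import Mathlib

open Real Filter

theorem stmt3 (lam Lam : ℝ) (hlam : 0 < lam) (hll : lam ≤ Lam)
    (z : ℝ → ℝ) (hC2 : ContDiff ℝ 2 z) (hz0 : z 0 = 0)
    (hneg : ∀ r, 0 ≤ r → z r ≤ 0)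
    (hdec : ∀ r, 0 < r → deriv z r ≤ 0)
    (hreg : Filter.Tendsto (fun r : ℝ => r ^ (lam / Lam) * deriv z r)
      (nhdsWithin 0 (Set.Ioi 0)) (nhds 0))
    (hODE : ∀ r, 0 < r →
      -Lam * deriv (deriv z) r - lam * deriv z r / r = Real.exp (z r)) :
    (∀ r, 0 < r → deriv z r ≤ 0 ∧ -r / (lam + Lam) ≤ deriv z r) ∧
    Filter.Tendsto (deriv z) (nhdsWithin 0 (Set.Ioi 0)) (nhds 0) := by
  have hLam : (0:ℝ) < Lam := lt_of_lt_of_le hlam hll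
  have hc : (0:ℝ) < lam + Lam := by linarith
  have hC2' : ContDiff ℝ (1+1) z := by exact_mod_cast hC2
  have h1 : ContDiff ℝ 1 (deriv z) := (contDiff_succ_iff_deriv.mp hC2').2.2
  have hdz : Differentiable ℝ (deriv z) := h1.differentiable one_ne_zero
  have hcz : Continuous z := hC2.continuous
  have hcdz : Continuous (deriv z) := hdz.continuous
  have hcddz : Continuous (deriv (deriv z)) := h1.continuous_deriv le_rfl
  -- Step 1: tendsto of deriv z to 0
  have hT : Filter.Tendsto (deriv z) (nhdsWithin 0 (Set.Ioi 0)) (nhds 0) := by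
    have heq : ∀ r ∈ Set.Ioi (0:ℝ),
        deriv z r = r * ((-Real.exp (z r) - Lam * deriv (deriv z) r)/lam) := by
      intro r hr
      have hODEr := hODE r hr
      have hr0 : r ≠ 0 := ne_of_gt hr
      have h' : lam * deriv z r / r = -Real.exp (z r) - Lam * deriv (deriv z) r := by
        linarith [hODEr]
      have e : lam * deriv z r = (-Real.exp (z r) - Lam * deriv (deriv z) r) * r :=
        (div_eq_iff hr0).mp h'
      have e2 : r * ((-Real.exp (z r) - Lam * deriv (deriv z) r) / lam)
          = (-Real.exp (z r) - Lam * deriv (deriv z) r) * r / lam := by ring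
      rw [e2, ← e, mul_comm, mul_div_assoc]
      field_simp
    have hg : Continuous (fun r : ℝ =>
        r * ((-Real.exp (z r) - Lam * deriv (deriv z) r)/lam)) := by
      fun_prop
    have hg0 : Filter.Tendsto (fun r : ℝ =>
        r * ((-Real.exp (z r) - Lam * deriv (deriv z) r)/lam))
        (nhdsWithin 0 (Set.Ioi 0)) (nhds 0) := by
      have := (hg.tendsto 0).mono_left (nhdsWithin_le_nhds (s := Set.Ioi 0))
      simpa using this
    refine hg0.congr' ?_
    filter_upwards [self_mem_nhdsWithin] with r hr
    exact (heq r hr).symm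
  have hd0 : deriv z 0 = 0 := by
    have h2 : Filter.Tendsto (deriv z) (nhdsWithin 0 (Set.Ioi 0))
        (nhds (deriv z 0)) := (hcdz.tendsto 0).mono_left nhdsWithin_le_nhds
    exact tendsto_nhds_unique h2 hT
  -- Step 2: the pointwise bound
  refine ⟨?_, hT⟩
  intro r hr
  refine ⟨hdec r hr, ?_⟩
  by_contra hcon
  push_neg at hcon
  set h : ℝ → ℝ := fun s => deriv z s + s / (lam + Lam) with hh
  have hhr : h r < 0 := by
    have : deriv z r < -r / (lam + Lam) := hcon
    have : deriv z r + r / (lam + Lam) < 0 := by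
      have := neg_div (lam + Lam) r
      linarith [hcon]
    simpa [hh] using this
  have hhcont : Continuous h := by fun_prop
  have hh0 : h 0 = 0 := by simp [hh, hd0]
  have hderiv : ∀ s : ℝ, deriv h s = deriv (deriv z) s + 1 / (lam + Lam) := by
    intro s
    have H : HasDerivAt h (deriv (deriv z) s + 1 / (lam + Lam)) s := by
      have h1' : HasDerivAt (deriv z) (deriv (deriv z) s) s := (hdz s).hasDerivAt
      have h2' : HasDerivAt (fun x : ℝ => x / (lam + Lam)) (1 / (lam + Lam)) s := by
        simpa using (hasDerivAt_id s).div_const (lam + Lam)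
      exact h1'.add h2'
    exact H.deriv
  have kpos : ∀ s : ℝ, 0 < s → h s < 0 → 0 < deriv h s := by
    intro s hs hhs
    have hODEs := hODE s hs
    have hexp : Real.exp (z s) ≤ 1 := Real.exp_le_one_iff.mpr (hneg s hs.le)
    have hzs : deriv z s < -s / (lam + Lam) := by
      have : deriv z s + s / (lam + Lam) < 0 := hhs
      have := neg_div (lam + Lam) s
      linarith
    have h3 : lam * deriv z s / s < -(lam / (lam + Lam)) := by
      rw [div_lt_iff₀ hs]
      calc lam * deriv z s < lam * (-s / (lam + Lam)) := (mul_lt_mul_iff_right₀ hlam).mpr hzs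
        _ = -(lam / (lam + Lam)) * s := by ring
    rw [hderiv s]
    have hid : lam / (lam + Lam) + Lam / (lam + Lam) = 1 := by field_simp
    have h5 : -Lam * deriv (deriv z) s < Lam / (lam + Lam) := by
      linarith [hODEs, hexp, h3, hid]
    have hq : Lam / (lam + Lam) = Lam * (1 / (lam + Lam)) := by ring
    have h6 : 0 < Lam * deriv (deriv z) s + Lam * (1 / (lam + Lam)) := by
      linarith [h5, hq]
    nlinarith [h6, hLam]
  -- sup argument
  set S : Set ℝ := {s | s ∈ Set.Icc 0 r ∧ 0 ≤ h s} with hS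
  have hS0 : (0:ℝ) ∈ S := ⟨⟨le_refl 0, hr.le⟩, by rw [hh0]⟩
  have hSne : S.Nonempty := ⟨0, hS0⟩
  have hSbdd : BddAbove S := ⟨r, fun x hx => hx.1.2⟩
  have hSclosed : IsClosed S := by
    have : S = Set.Icc 0 r ∩ h ⁻¹' Set.Ici 0 := by
      ext x; simp [hS, Set.mem_preimage]
    rw [this]
    exact isClosed_Icc.inter (isClosed_Ici.preimage hhcont)
  set t := sSup S with ht
  have htS : t ∈ S := hSclosed.csSup_mem hSne hSbdd
  have ht0 : 0 ≤ t := htS.1.1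
  have htr : t < r := by
    rcases lt_or_eq_of_le htS.1.2 with h' | h'
    · exact h'
    · exfalso; have := htS.2; rw [h'] at this; linarith
  have hneg_on : ∀ s ∈ Set.Ioc t r, h s < 0 := by
    intro s hs
    by_contra hcontra
    push_neg at hcontra
    have hsS : s ∈ S := ⟨⟨le_trans ht0 hs.1.le, hs.2⟩, hcontra⟩
    have : s ≤ t := le_csSup hSbdd hsS
    exact absurd hs.1 (not_lt.mpr this)
  have hmono : StrictMonoOn h (Set.Icc t r) := by
    apply strictMonoOn_of_deriv_pos (convex_Icc t r) (hhcont.continuousOn)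
    intro x hx
    rw [interior_Icc] at hx
    have hx0 : 0 < x := lt_of_le_of_lt ht0 hx.1
    exact kpos x hx0 (hneg_on x ⟨hx.1, hx.2.le⟩)
  have : h t < h r := hmono ⟨le_refl t, htr.le⟩ ⟨htr.le, le_refl r⟩ htr
  linarith [htS.2, hhr]
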